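/- Let P and Q be polytopes in ℝ^n (convex hulls of finite sets), each of affine dimension n−1, such that the affine hulls aff(P) and aff(Q) are parallel and disjoint affine hyperplanes, and let x ∈ P and z ∈ Q. Then the open segment (x,z) is contained in the topological boundary of conv(P ∪ Q) if and only if for every p ∈ relint(P) and every ε > 0 one has z + ε(x − p) ∉ Q; equivalently, the open segment (x,z) is contained in the topological interior of conv(P ∪ Q) if and only if there exist p ∈ relint(P) and ε > 0 such that z + ε(x − p) ∈ Q. -/

import Mathlib

open Set Metric Module
set_option maxHeartbeats 1000000

section AUX

variable {E : Type*} [NormedAddCommGroup E] [NormedSpace ℝ E]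

theorem mem_relint_iff (s : Set E) (x : E) :
    x ∈ intrinsicInterior ℝ s ↔ x ∈ affineSpan ℝ s ∧
      ∃ ε > 0, ∀ y ∈ affineSpan ℝ s, dist y x < ε → y ∈ s := by
  constructor
  · rintro ⟨y, hy, rfl⟩
    refine ⟨y.2, ?_⟩
    rw [mem_interior_iff_mem_nhds, Metric.mem_nhds_iff] at hy
    obtain ⟨ε, hε, hb⟩ := hy
    exact ⟨ε, hε, fun w hw hd => hb (show (⟨w, hw⟩ : affineSpan ℝ s) ∈ ball y ε by
      rw [mem_ball, Subtype.dist_eq]; exact hd)⟩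
  · rintro ⟨hxm, ε, hε, hb⟩
    refine ⟨⟨x, hxm⟩, ?_, rfl⟩
    rw [mem_interior_iff_mem_nhds, Metric.mem_nhds_iff]
    refine ⟨ε, hε, fun w hw => hb w w.2 ?_⟩
    rw [mem_ball, Subtype.dist_eq] at hw
    exact hw

theorem relint_combo {s : Set E} (hs : Convex ℝ s) {p q : E}
    (hp : p ∈ intrinsicInterior ℝ s) (hq : q ∈ s) {t : ℝ} (ht0 : 0 < t) (ht1 : t ≤ 1) :
    t • p + (1 - t) • q ∈ intrinsicInterior ℝ s := by
  obtain ⟨hpm, ε, hε, hb⟩ := (mem_relint_iff s p).1 hp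
  have hqm : q ∈ affineSpan ℝ s := subset_affineSpan ℝ s hq
  refine (mem_relint_iff s _).2 ⟨?_, t * ε, by positivity, ?_⟩
  · have h1 : t • (p - q) ∈ (affineSpan ℝ s).direction :=
      Submodule.smul_mem _ t (by simpa using AffineSubspace.vsub_mem_direction hpm hqm)
    have := AffineSubspace.vadd_mem_of_mem_direction h1 hqm
    have heq : t • (p - q) +ᵥ q = t • p + (1 - t) • q := by
      simp only [vadd_eq_add]; module
    rwa [heq] at this
  · intro y hy hd
    set u := t • p + (1 - t) • q with hu
    have hw : y - u ∈ (affineSpan ℝ s).direction := by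
      have hum : u ∈ affineSpan ℝ s := by
        have h1 : t • (p - q) ∈ (affineSpan ℝ s).direction :=
          Submodule.smul_mem _ t (by simpa using AffineSubspace.vsub_mem_direction hpm hqm)
        have := AffineSubspace.vadd_mem_of_mem_direction h1 hqm
        have heq : t • (p - q) +ᵥ q = u := by simp only [vadd_eq_add, hu]; module
        rwa [heq] at this
      simpa using AffineSubspace.vsub_mem_direction hy hum
    set w := y - u with hwdef
    have hp' : p + t⁻¹ • w ∈ affineSpan ℝ s := by
      have := AffineSubspace.vadd_mem_of_mem_direction
        (Submodule.smul_mem _ t⁻¹ hw) hpm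
      simpa [add_comm] using this
    have hd' : dist (p + t⁻¹ • w) p < ε := by
      rw [dist_eq_norm, add_sub_cancel_left, norm_smul, Real.norm_eq_abs,
        abs_inv, abs_of_pos ht0]
      rw [dist_eq_norm] at hd
      rw [inv_mul_lt_iff₀ ht0]
      calc ‖w‖ = ‖y - u‖ := rfl
        _ < t * ε := hd
        _ = t * ε := rfl
    have hps : p + t⁻¹ • w ∈ s := hb _ hp' hd'
    have hy_eq : y = t • (p + t⁻¹ • w) + (1 - t) • q := by
      have : t • (t⁻¹ • w) = w := by rw [smul_smul, mul_inv_cancel₀ ht0.ne', one_smul]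
      calc y = u + w := by rw [hwdef]; abel
        _ = t • p + (1 - t) • q + t • (t⁻¹ • w) := by rw [this, hu]
        _ = t • (p + t⁻¹ • w) + (1 - t) • q := by rw [smul_add]; abel
    rw [hy_eq]
    exact hs hps hq ht0.le (by linarith) (by ring)

end AUX

/-- for polytopes `P`, `Q` of affine dimension `n-1` in `ℝⁿ` whose affine hulls
are parallel and disjoint hyperplanes, and `x ∈ P`, `z ∈ Q`: the open segment `(x,z)` lies
in the boundary of `conv(P ∪ Q)` iff `z + ε(x - p) ∉ Q` for every `p ∈ relint P` and `ε > 0`;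
equivalently `(x,z)` lies in the interior of `conv(P ∪ Q)` iff `z + ε(x - p) ∈ Q` for some
`p ∈ relint P` and `ε > 0`. -/
theorem stmt4 (n : ℕ) (P Q : Set (Fin n → ℝ))
    (hP : ∃ s : Finset (Fin n → ℝ), P = convexHull ℝ (↑s : Set (Fin n → ℝ)))
    (hQ : ∃ s : Finset (Fin n → ℝ), Q = convexHull ℝ (↑s : Set (Fin n → ℝ)))
    (hPdim : Module.finrank ℝ (affineSpan ℝ P).direction = n - 1)
    (hQdim : Module.finrank ℝ (affineSpan ℝ Q).direction = n - 1)
    (hpar : (affineSpan ℝ P).Parallel (affineSpan ℝ Q))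
    (hdisj : Disjoint (affineSpan ℝ P : Set (Fin n → ℝ)) (affineSpan ℝ Q : Set (Fin n → ℝ)))
    (x z : Fin n → ℝ) (hx : x ∈ P) (hz : z ∈ Q) :
    (openSegment ℝ x z ⊆ frontier (convexHull ℝ (P ∪ Q)) ↔
      ∀ p ∈ intrinsicInterior ℝ P, ∀ ε : ℝ, 0 < ε → z + ε • (x - p) ∉ Q) ∧
    (openSegment ℝ x z ⊆ interior (convexHull ℝ (P ∪ Q)) ↔
      ∃ p ∈ intrinsicInterior ℝ P, ∃ ε : ℝ, 0 < ε ∧ z + ε • (x - p) ∈ Q) := by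
  have hPc : Convex ℝ P := by obtain ⟨s, hs⟩ := hP; rw [hs]; exact convex_convexHull ℝ _
  have hQc : Convex ℝ Q := by obtain ⟨s, hs⟩ := hQ; rw [hs]; exact convex_convexHull ℝ _
  have hxA : x ∈ affineSpan ℝ P := subset_affineSpan ℝ P hx
  have hzB : z ∈ affineSpan ℝ Q := subset_affineSpan ℝ Q hz
  set V : Submodule ℝ (Fin n → ℝ) := (affineSpan ℝ P).direction with hV
  have hdir : (affineSpan ℝ Q).direction = V := hpar.direction_eq.symm
  -- z - x not in V
  have hzxV : z - x ∉ V := by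
    intro h
    have hzA : z ∈ affineSpan ℝ P := by
      have := AffineSubspace.vadd_mem_of_mem_direction h hxA
      simpa [vadd_eq_add, sub_add_cancel] using this
    exact Set.disjoint_left.1 hdisj hzA hzB
  have hzx0 : z - x ≠ 0 := fun h => hzxV (h ▸ V.zero_mem)
  have hn : 1 ≤ n := by
    rcases Nat.eq_zero_or_pos n with h | h
    · subst h; exact absurd (funext fun i => i.elim0 : z - x = 0) hzx0
    · exact h
  set W : Submodule ℝ (Fin n → ℝ) := ℝ ∙ (z - x) with hW
  have hVWdisj : Disjoint V W := by
    rw [hW, Submodule.disjoint_span_singleton]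
    intro h; exact absurd h hzxV
  have hVWtop : V ⊔ W = ⊤ := by
    apply Submodule.eq_top_of_finrank_eq
    have h1 := Submodule.finrank_sup_add_finrank_inf_eq V W
    rw [disjoint_iff.1 hVWdisj] at h1
    simp only [finrank_bot, add_zero] at h1
    rw [h1, hPdim, hW, finrank_span_singleton hzx0]
    simp only [Module.finrank_pi, Fintype.card_fin]
    omega
  have hcompl : IsCompl V W := ⟨hVWdisj, codisjoint_iff.2 hVWtop⟩
  -- the projection onto W
  set πW := W.linearProjOfIsCompl V hcompl.symm with hπW
  have hdecomp : ∀ w : Fin n → ℝ, w - (πW w : Fin n → ℝ) ∈ V := by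
    intro w
    have h : (V.linearProjOfIsCompl W hcompl w : Fin n → ℝ) +
        (W.linearProjOfIsCompl V hcompl.symm w : Fin n → ℝ) = w :=
      Submodule.projection_add_projection_eq_self hcompl w
    have h2 : w - (πW w : Fin n → ℝ) = (V.linearProjOfIsCompl W hcompl w : Fin n → ℝ) :=
      sub_eq_of_eq_add h.symm
    rw [h2]; exact Submodule.coe_mem _
  obtain ⟨i, hi⟩ : ∃ i, (z - x) i ≠ 0 := by
    by_contra h; push_neg at h; exact hzx0 (funext h)
  set f : (Fin n → ℝ) → ℝ := fun w => (πW w : Fin n → ℝ) i / (z - x) i with hf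
  have hf_eq : ∀ w, (πW w : Fin n → ℝ) = f w • (z - x) := by
    intro w
    obtain ⟨c, hc⟩ := Submodule.mem_span_singleton.1 (πW w).2
    have : f w = c := by
      have hi' : z i - x i ≠ 0 := by simpa using hi
      rw [hf]; simp only [← hc, Pi.smul_apply, smul_eq_mul, Pi.sub_apply]
      rw [mul_div_assoc, div_self hi', mul_one]
    rw [this, ← hc]
  have hf_cont : Continuous f := by
    rw [hf]
    exact ((continuous_apply i).comp
      (continuous_subtype_val.comp πW.continuous_of_finiteDimensional)).div_const _
  have hf0 : f 0 = 0 := by rw [hf]; simp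
  set C := convexHull ℝ (P ∪ Q) with hC
  have hCconv : Convex ℝ C := convex_convexHull ℝ _
  have hPC : P ⊆ C := Set.subset_union_left.trans (subset_convexHull ℝ _)
  have hQC : Q ⊆ C := Set.subset_union_right.trans (subset_convexHull ℝ _)
  set m : Fin n → ℝ := (1/2 : ℝ) • (x + z) with hm
  have ball_core : ∀ p' q' : Fin n → ℝ, p' ∈ intrinsicInterior ℝ P →
      q' ∈ intrinsicInterior ℝ Q → p' + q' = x + z → m ∈ interior C := by
    intro p' q' hp' hq' hpq
    obtain ⟨hp'A, r₁, hr₁, hb₁⟩ := (mem_relint_iff P p').1 hp'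
    obtain ⟨hq'B, r₂, hr₂, hb₂⟩ := (mem_relint_iff Q q').1 hq'
    set r := min r₁ r₂ with hrdef
    have hr : 0 < r := lt_min hr₁ hr₂
    set d : Fin n → ℝ := (z - x) - (q' - p') with hd
    have hdV : d ∈ V := by
      have h1 : z - q' ∈ V := by
        rw [← hdir]; simpa using AffineSubspace.vsub_mem_direction hzB hq'B
      have h2 : p' - x ∈ V := by simpa using AffineSubspace.vsub_mem_direction hp'A hxA
      have h3 : d = (z - q') + (p' - x) := by rw [hd]; abel
      rw [h3]; exact V.add_mem h1 h2
    set v : (Fin n → ℝ) → (Fin n → ℝ) := fun w => (w - f w • (z - x)) + f w • d with hv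
    have hvV : ∀ w, v w ∈ V := by
      intro w
      refine V.add_mem ?_ (V.smul_mem _ hdV)
      rw [← hf_eq w]; exact hdecomp w
    have hvcont : Continuous v := by
      rw [hv]
      exact (continuous_id.sub (hf_cont.smul continuous_const)).add
        (hf_cont.smul continuous_const)
    have hv0 : v 0 = 0 := by rw [hv]; simp [hf0]
    obtain ⟨δ₁, hδ₁, hδ₁p⟩ := Metric.continuousAt_iff.1 (hvcont.continuousAt (x := 0)) r hr
    obtain ⟨δ₂, hδ₂, hδ₂p⟩ := Metric.continuousAt_iff.1 (hf_cont.continuousAt (x := 0))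
      (1/2) (by norm_num)
    set ρ := min δ₁ δ₂ with hρdef
    have hρ : 0 < ρ := lt_min hδ₁ hδ₂
    rw [mem_interior_iff_mem_nhds, Metric.mem_nhds_iff]
    refine ⟨ρ, hρ, fun y hy => ?_⟩
    set w := y - m with hw
    have hwd : dist w 0 < ρ := by
      rw [dist_zero_right, hw, ← dist_eq_norm]
      exact hy
    have hv_lt : ‖v w‖ < r := by
      have := hδ₁p (lt_of_lt_of_le hwd (min_le_left _ _))
      rwa [hv0, dist_zero_right] at this
    have hf_lt : |f w| < 1/2 := by
      have := hδ₂p (lt_of_lt_of_le hwd (min_le_right _ _))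
      rwa [hf0, dist_zero_right, Real.norm_eq_abs] at this
    obtain ⟨hfl, hfr⟩ := abs_lt.1 hf_lt
    set lam := 1/2 + f w with hlam
    have hlam0 : 0 < lam := by rw [hlam]; linarith
    have hlam1 : lam < 1 := by rw [hlam]; linarith
    have haPA : p' + v w ∈ affineSpan ℝ P := by
      have := AffineSubspace.vadd_mem_of_mem_direction (hvV w) hp'A
      simpa [vadd_eq_add, add_comm] using this
    have haP : p' + v w ∈ P := by
      refine hb₁ _ haPA ?_
      rw [dist_eq_norm, add_sub_cancel_left]
      exact lt_of_lt_of_le hv_lt (min_le_left _ _)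
    have hbQA : q' + v w ∈ affineSpan ℝ Q := by
      have hvQ : v w ∈ (affineSpan ℝ Q).direction := by rw [hdir]; exact hvV w
      have := AffineSubspace.vadd_mem_of_mem_direction hvQ hq'B
      simpa [vadd_eq_add, add_comm] using this
    have hbQ : q' + v w ∈ Q := by
      refine hb₂ _ hbQA ?_
      rw [dist_eq_norm, add_sub_cancel_left]
      exact lt_of_lt_of_le hv_lt (min_le_right _ _)
    have hy_eq : y = (1 - lam) • (p' + v w) + lam • (q' + v w) := by
      funext j
      have h1 := congrFun hpq j
      have h2 : y j = m j + w j := by rw [hw]; simp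
      rw [hm] at h2
      simp only [hlam, hv, hd, Pi.add_apply, Pi.smul_apply, Pi.sub_apply,
        smul_eq_mul] at h1 h2 ⊢
      linear_combination h2 - (1/2) * h1
    rw [hy_eq]
    exact hCconv (hPC haP) (hQC hbQ) (by linarith) hlam0.le (by ring)
  have key_mp : m ∈ interior C →
      ∃ p ∈ intrinsicInterior ℝ P, ∃ ε : ℝ, 0 < ε ∧ z + ε • (x - p) ∈ Q := by
    intro hmint
    obtain ⟨p₀, hp₀⟩ := Set.Nonempty.intrinsicInterior hPc ⟨x, hx⟩
    obtain ⟨q₀, hq₀⟩ := Set.Nonempty.intrinsicInterior hQc ⟨z, hz⟩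
    have hp₀P : p₀ ∈ P := intrinsicInterior_subset hp₀
    have hq₀Q : q₀ ∈ Q := intrinsicInterior_subset hq₀
    have hp₀A : p₀ ∈ affineSpan ℝ P := subset_affineSpan ℝ P hp₀P
    have hq₀B : q₀ ∈ affineSpan ℝ Q := subset_affineSpan ℝ Q hq₀Q
    set u : Fin n → ℝ := m - (1/2 : ℝ) • (p₀ + q₀) with hu
    have huV : u ∈ V := by
      have h1 : x - p₀ ∈ V := by simpa using AffineSubspace.vsub_mem_direction hxA hp₀A
      have h2 : z - q₀ ∈ V := by
        rw [← hdir]; simpa using AffineSubspace.vsub_mem_direction hzB hq₀B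
      have h3 : u = (1/2 : ℝ) • (x - p₀) + (1/2 : ℝ) • (z - q₀) := by
        rw [hu, hm]; funext j; simp; ring
      rw [h3]; exact V.add_mem (V.smul_mem _ h1) (V.smul_mem _ h2)
    obtain ⟨ρ, hρ, hball⟩ := Metric.mem_nhds_iff.1 (mem_interior_iff_mem_nhds.1 hmint)
    set δ := ρ / (2 * (‖u‖ + 1)) with hδ
    have hupos : (0:ℝ) < ‖u‖ + 1 := by positivity
    have hδ0 : 0 < δ := by positivity
    have hm' : m + δ • u ∈ C := by
      apply hball
      rw [mem_ball, dist_eq_norm, add_sub_cancel_left, norm_smul, Real.norm_eq_abs,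
        abs_of_pos hδ0]
      have heq : δ * (2 * (‖u‖ + 1)) = ρ := by rw [hδ]; field_simp
      nlinarith [norm_nonneg u]
    have hCeq : C = convexJoin ℝ P Q := by
      rw [hC, convexHull_union ⟨x, hx⟩ ⟨z, hz⟩, hPc.convexHull_eq, hQc.convexHull_eq]
    rw [hCeq, mem_convexJoin] at hm'
    obtain ⟨p', hp'P, q', hq'Q, hseg⟩ := hm'
    obtain ⟨μ, ν, hμ, hν, hμν, heq⟩ := hseg
    have hp'A : p' ∈ affineSpan ℝ P := subset_affineSpan ℝ P hp'P
    have hq'B : q' ∈ affineSpan ℝ Q := subset_affineSpan ℝ Q hq'Q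
    have hμhalf : μ = 1/2 := by
      by_contra hne
      have hmem : (μ - 1/2) • (z - x) ∈ V := by
        have e1 : (μ - 1/2) • (z - x) = μ • (p' - x) + ν • (q' - z) - δ • u := by
          funext j
          have h1 := congrFun heq j
          simp only [hm, Pi.smul_apply, Pi.sub_apply, Pi.add_apply, smul_eq_mul] at h1 ⊢
          linear_combination (-1 : ℝ) * h1 + z j * hμν
        rw [e1]
        exact sub_mem (add_mem
          (V.smul_mem μ (by simpa using AffineSubspace.vsub_mem_direction hp'A hxA))
          (V.smul_mem ν (by rw [← hdir]; simpa using AffineSubspace.vsub_mem_direction hq'B hzB)))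
          (V.smul_mem δ huV)
      apply hzxV
      have h4 := V.smul_mem (μ - 1/2)⁻¹ hmem
      rwa [smul_smul, inv_mul_cancel₀ (sub_ne_zero.2 hne), one_smul] at h4
    have hνhalf : ν = 1/2 := by rw [hμhalf] at hμν; linarith
    set t := δ / (1 + δ) with ht
    have h1δ : (0:ℝ) < 1 + δ := by linarith
    have ht0 : 0 < t := by positivity
    have ht1 : t ≤ 1 := by rw [ht, div_le_one h1δ]; linarith
    have hts : (1 - t) * (1 + δ) = 1 := by rw [ht]; field_simp; ring
    have htδ : t * (1 + δ) = δ := by rw [ht]; field_simp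
    set p'' := t • p₀ + (1 - t) • p' with hp''
    have hp''relint : p'' ∈ intrinsicInterior ℝ P := relint_combo hPc hp₀ hp'P ht0 ht1
    set q'' := t • q₀ + (1 - t) • q' with hq''
    have hq''Q : q'' ∈ Q := hQc hq₀Q hq'Q ht0.le (by linarith) (by ring)
    refine ⟨p'', hp''relint, 1, one_pos, ?_⟩
    have hfinal : z + (1:ℝ) • (x - p'') = q'' := by
      funext j
      have h1 := congrFun heq j
      simp only [hp'', hq'', hu, hm, hμhalf, hνhalf, Pi.add_apply, Pi.smul_apply, Pi.sub_apply,
        smul_eq_mul, one_mul] at h1 ⊢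
      linear_combination (-(2*(1-t))) * h1 - (x j + z j) * hts - (p₀ j + q₀ j) * htδ
    rw [hfinal]; exact hq''Q
  have key_mpr : (∃ p ∈ intrinsicInterior ℝ P, ∃ ε : ℝ, 0 < ε ∧ z + ε • (x - p) ∈ Q) →
      m ∈ interior C := by
    rintro ⟨p, hp, ε, hε, hq0⟩
    set t := min ε 1 with htdef
    have ht0 : 0 < t := lt_min hε one_pos
    have ht1 : t ≤ 1 := min_le_right _ _
    have htε : t ≤ ε := min_le_left _ _
    have hp' : t • p + (1 - t) • x ∈ intrinsicInterior ℝ P := relint_combo hPc hp hx ht0 ht1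
    set q0 := z + ε • (x - p) with hq0def
    have htε0 : 0 < t / ε := by positivity
    have htε1 : t / ε ≤ 1 := by rw [div_le_one hε]; exact htε
    have hq'Q : (t/ε) • q0 + (1 - t/ε) • z ∈ Q := hQc hq0 hz htε0.le (by linarith) (by ring)
    set p' := t • p + (1 - t) • x with hp'def
    set q' := (t/ε) • q0 + (1 - t/ε) • z with hq'def
    have hsum : p' + q' = x + z := by
      funext j
      simp only [hp'def, hq'def, hq0def, Pi.add_apply, Pi.smul_apply, Pi.sub_apply, smul_eq_mul]
      field_simp
      ring
    obtain ⟨q₀r, hq₀r⟩ := Set.Nonempty.intrinsicInterior hQc ⟨z, hz⟩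
    obtain ⟨hp'A, r, hr, hbP⟩ := (mem_relint_iff P p').1 hp'
    set e := q' - q₀r with he
    set η := (r/2) / (r/2 + ‖e‖ + 1) with hη
    have hden : (0:ℝ) < r/2 + ‖e‖ + 1 := by positivity
    have hη0 : 0 < η := by positivity
    have hη1 : η ≤ 1 := by rw [hη, div_le_one hden]; linarith [norm_nonneg e]
    have hηe : ‖η • e‖ < r := by
      rw [norm_smul, Real.norm_eq_abs, abs_of_pos hη0, hη, div_mul_eq_mul_div,
        div_lt_iff₀ hden]
      nlinarith [norm_nonneg e, hr]
    have hq'' : η • q₀r + (1 - η) • q' ∈ intrinsicInterior ℝ Q :=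
      relint_combo hQc hq₀r hq'Q hη0 hη1
    set p'' := p' + η • e with hp''def
    have hp''relint : p'' ∈ intrinsicInterior ℝ P := by
      have heV : e ∈ V := by
        rw [he, ← hdir]
        have h1 : q' ∈ affineSpan ℝ Q := subset_affineSpan ℝ Q hq'Q
        have h2 : q₀r ∈ affineSpan ℝ Q := subset_affineSpan ℝ Q (intrinsicInterior_subset hq₀r)
        simpa using AffineSubspace.vsub_mem_direction h1 h2
      refine (mem_relint_iff P p'').2 ⟨?_, r - ‖η • e‖, by linarith, ?_⟩
      · have := AffineSubspace.vadd_mem_of_mem_direction (V.smul_mem η heV) hp'A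
        rw [hp''def]; simpa [vadd_eq_add, add_comm] using this
      · intro y hy hd
        apply hbP y hy
        have hdpp : dist p'' p' = ‖η • e‖ := by
          rw [hp''def, dist_eq_norm, add_sub_cancel_left]
        calc dist y p' ≤ dist y p'' + dist p'' p' := dist_triangle _ _ _
          _ < (r - ‖η • e‖) + ‖η • e‖ := by rw [hdpp]; exact add_lt_add_left hd _
          _ = r := by ring
    have hsum'' : p'' + (η • q₀r + (1 - η) • q') = x + z := by
      rw [← hsum, hp''def, he]; funext j; simp; ring
    exact ball_core p'' _ hp''relint hq'' hsum''
  have hxC : x ∈ C := hPC hx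
  have hzC : z ∈ C := hQC hz
  have hm_seg : m ∈ openSegment ℝ x z := by
    refine ⟨1/2, 1/2, by norm_num, by norm_num, by norm_num, ?_⟩
    rw [hm]; funext j; simp; ring
  have seg_sub_C : openSegment ℝ x z ⊆ C := hCconv.openSegment_subset hxC hzC
  have seg_int : m ∈ interior C → openSegment ℝ x z ⊆ interior C := by
    intro hmi y hy
    obtain ⟨a, b, ha, hb, hab, hy_eq⟩ := hy
    have hb' : b = 1 - a := by linarith
    subst hb'
    rcases le_or_gt a (1/2) with hc | hc
    · have h2a : y = (2*a) • m + (1 - 2*a) • z := by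
        rw [← hy_eq, hm]; funext j
        simp only [Pi.add_apply, Pi.smul_apply, smul_eq_mul]
        ring
      rw [h2a]
      exact hCconv.combo_interior_closure_mem_interior hmi (subset_closure hzC)
        (by linarith) (by linarith) (by ring)
    · have h2b : y = (2*(1-a)) • m + (1 - 2*(1-a)) • x := by
        rw [← hy_eq, hm]; funext j
        simp only [Pi.add_apply, Pi.smul_apply, smul_eq_mul]
        ring
      rw [h2b]
      exact hCconv.combo_interior_closure_mem_interior hmi (subset_closure hxC)
        (by linarith) (by linarith) (by ring)
  have seg_back : ∀ y ∈ openSegment ℝ x z, y ∈ interior C → m ∈ interior C := by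
    intro y hy hyi
    obtain ⟨a, b, ha, hb, hab, hy_eq⟩ := hy
    have hb' : b = 1 - a := by linarith
    subst hb'
    rcases le_or_gt (1/2) a with hc | hc
    · have ha2 : (2*a) ≠ 0 := by positivity
      have hmeq : m = (1/(2*a)) • y + (1 - 1/(2*a)) • z := by
        rw [hm, ← hy_eq]; funext j
        simp only [Pi.add_apply, Pi.smul_apply, smul_eq_mul]
        field_simp
        ring
      rw [hmeq]
      exact hCconv.combo_interior_closure_mem_interior hyi (subset_closure hzC)
        (by positivity) (by rw [sub_nonneg, div_le_one (by linarith)]; linarith)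
        (by ring)
    · have hc' : (0:ℝ) < 1 - a := by linarith
      have ha2 : (2*(1-a)) ≠ 0 := by positivity
      have hmeq : m = (1/(2*(1-a))) • y + (1 - 1/(2*(1-a))) • x := by
        rw [hm, ← hy_eq]; funext j
        simp only [Pi.add_apply, Pi.smul_apply, smul_eq_mul]
        field_simp
        ring
      rw [hmeq]
      exact hCconv.combo_interior_closure_mem_interior hyi (subset_closure hxC)
        (by positivity) (by rw [sub_nonneg, div_le_one (by linarith)]; linarith)
        (by ring)
  constructor
  · constructor
    · intro hsub p hp ε hε hcon
      have hmf : m ∈ closure C \ interior C := hsub hm_seg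
      exact hmf.2 (key_mpr ⟨p, hp, ε, hε, hcon⟩)
    · intro hall y hy
      refine ⟨subset_closure (seg_sub_C hy), fun hyint => ?_⟩
      obtain ⟨p, hp, ε, hε, hmem⟩ := key_mp (seg_back y hy hyint)
      exact hall p hp ε hε hmem
  · constructor
    · intro hsub
      exact key_mp (hsub hm_seg)
    · intro hex
      exact seg_int (key_mpr hex)
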